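/- Let V be a finite nonempty type, let G be a group acting on V, and let H be a real symmetric matrix indexed by V such that: (i) H_{u,v} ≤ 0 for all u ≠ v; (ii) H is irreducible (for all u,v there is a sequence u = x₀, …, x_m = v with H_{x_j,x_{j+1}} ≠ 0 for each j); and (iii) H is G-invariant, H_{g•u, g•v} = H_{u,v} for all g,u,v. Let R be a set of orbit representatives and define H' : R → R → ℝ by H'(r,r') := Σ_{v ∈ O_{r'}} H_{r,v}. Then there exists a vector ψ : R → ℝ with ψ(r) > 0 for all r ∈ R such that Σ_{r' ∈ R} H'(r,r')·ψ(r') = λ₀(H)·ψ(r) for all r ∈ R, where λ₀(H) is the smallest eigenvalue of H; i.e., the smallest eigenvalue of H is an eigenvalue of the effective matrix H' with a strictly positive right eigenvector, given by the restriction to R of the positive ground state of H. -/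

import Mathlib

open MulAction Finset

/-- The orbit of `u` under the action of `G`, as a `Finset` of the finite type `V`. -/
noncomputable def orbitFinset (G : Type*) {V : Type*} [Group G] [MulAction G V] [Fintype V]
    (u : V) : Finset V :=
  (MulAction.orbit G u).toFinite.toFinset

/-- `R` is a set of orbit representatives: it contains exactly one element of each orbit. -/
def IsOrbitReps (G : Type*) {V : Type*} [Group G] [MulAction G V] [Fintype V]
    (R : Finset V) : Prop :=
  ∀ v : V, ∃! r, r ∈ R ∧ r ∈ MulAction.orbit G v

open Matrix

/-- for a real symmetric, stoquastic, irreducible, `G`-invariant matrix `H`,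
the smallest eigenvalue `λ₀(H)` is an eigenvalue of the effective matrix
`H'(r,r') = Σ_{v ∈ O_{r'}} H_{r,v}` on a set of orbit representatives `R`, with a strictly
positive right eigenvector. -/
theorem effective_matrix_ground_eigenvalue {V G : Type*} [Fintype V] [DecidableEq V]
    [Nonempty V] [Group G] [MulAction G V]
    (H : Matrix V V ℝ) (hH : H.IsHermitian)
    (hoff : ∀ u v : V, u ≠ v → H u v ≤ 0)
    (hirr : ∀ u v : V, ∃ (m : ℕ) (x : ℕ → V), x 0 = u ∧ x m = v ∧
      ∀ j < m, H (x j) (x (j + 1)) ≠ 0)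
    (hinv : ∀ (g : G) (u v : V), H (g • u) (g • v) = H u v)
    (R : Finset V) (hR : IsOrbitReps G R) :
    ∃ ψ : V → ℝ, (∀ r ∈ R, 0 < ψ r) ∧
      ∀ r ∈ R, ∑ r' ∈ R, (∑ v ∈ orbitFinset G r', H r v) * ψ r' =
        (Finset.univ.inf' Finset.univ_nonempty hH.eigenvalues) * ψ r := by
  classical
  set lam := Finset.univ.inf' Finset.univ_nonempty hH.eigenvalues with hlamdef
  set b : V → V → ℝ := fun j => ⇑(hH.eigenvectorBasis j) with hbdef
  set eig : V → ℝ := hH.eigenvalues with heigdef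
  -- basic facts about the eigenbasis
  have heig : ∀ j, H *ᵥ b j = eig j • b j := hH.mulVec_eigenvectorBasis
  have horth : ∀ i j, ∑ v, b i v * b j v = if i = j then (1:ℝ) else 0 := by
    intro i j
    have h := (orthonormal_iff_ite.mp hH.eigenvectorBasis.orthonormal) i j
    simpa [PiLp.inner_apply, RCLike.inner_apply, mul_comm] using h
  have hexp : ∀ (x : V → ℝ) (v : V),
      x v = ∑ i, (∑ w, b i w * x w) * b i v := by
    intro x v
    have h := hH.eigenvectorBasis.sum_repr ((WithLp.equiv 2 (V → ℝ)).symm x)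
    have h2 := congrFun (congrArg (WithLp.equiv 2 (V → ℝ)) h) v
    simp only [OrthonormalBasis.repr_apply_apply, PiLp.inner_apply, RCLike.inner_apply,
      map_sum, WithLp.equiv_apply, WithLp.equiv_symm_apply, WithLp.ofLp_toLp, WithLp.ofLp_sum,
      WithLp.ofLp_smul, conj_trivial, Equiv.apply_symm_apply] at h2
    rw [← h2]
    exact (Finset.sum_apply _ _ _).trans (Finset.sum_congr rfl fun i _ => by simp [hbdef, mul_comm])
  -- Parseval-type identity
  have hpar : ∀ c d : V → ℝ,
      ∑ u, (∑ j, c j * b j u) * (∑ i, d i * b i u) = ∑ i, c i * d i := by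
    intro c d
    have key : ∀ j i, ∑ u, (c j * b j u) * (d i * b i u)
        = c j * d i * (if j = i then (1:ℝ) else 0) := by
      intro j i
      rw [← horth j i, Finset.mul_sum]
      exact Finset.sum_congr rfl fun u _ => by ring
    calc ∑ u, (∑ j, c j * b j u) * (∑ i, d i * b i u)
        = ∑ u, ∑ j, ∑ i, (c j * b j u) * (d i * b i u) := by
          refine Finset.sum_congr rfl fun u _ => ?_
          rw [Finset.sum_mul]
          exact Finset.sum_congr rfl fun j _ => Finset.mul_sum _ _ _
      _ = ∑ j, ∑ i, ∑ u, (c j * b j u) * (d i * b i u) := by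
          rw [Finset.sum_comm]
          exact Finset.sum_congr rfl fun j _ => Finset.sum_comm
      _ = ∑ j, ∑ i, c j * d i * (if j = i then (1:ℝ) else 0) := by
          exact Finset.sum_congr rfl fun j _ => Finset.sum_congr rfl fun i _ => key j i
      _ = ∑ i, c i * d i := by simp
  -- mulVec in eigencoordinates
  have hmv : ∀ (x : V → ℝ) (u : V),
      (H *ᵥ x) u = ∑ i, (eig i * (∑ w, b i w * x w)) * b i u := by
    intro x u
    have : (H *ᵥ x) u = ∑ v, H u v * x v := rfl
    rw [this]
    calc ∑ v, H u v * x v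
        = ∑ v, H u v * ∑ i, (∑ w, b i w * x w) * b i v := by
          refine Finset.sum_congr rfl fun v _ => by rw [← hexp x v]
      _ = ∑ v, ∑ i, (∑ w, b i w * x w) * (H u v * b i v) := by
          refine Finset.sum_congr rfl fun v _ => ?_
          rw [Finset.mul_sum]
          exact Finset.sum_congr rfl fun i _ => by ring
      _ = ∑ i, (∑ w, b i w * x w) * ∑ v, H u v * b i v := by
          rw [Finset.sum_comm]
          exact Finset.sum_congr rfl fun i _ => (Finset.mul_sum _ _ _).symm
      _ = ∑ i, (eig i * (∑ w, b i w * x w)) * b i u := by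
          refine Finset.sum_congr rfl fun i _ => ?_
          have : ∑ v, H u v * b i v = (H *ᵥ b i) u := rfl
          rw [this, heig i]
          simp [Pi.smul_apply, smul_eq_mul]; ring
  -- quadratic form identities
  have hq : ∀ x : V → ℝ, ∑ u, x u * (H *ᵥ x) u = ∑ i, eig i * (∑ w, b i w * x w)^2 := by
    intro x
    have h1 : ∑ u, x u * (H *ᵥ x) u
        = ∑ u, (∑ j, (∑ w, b j w * x w) * b j u) * (∑ i, (eig i * (∑ w, b i w * x w)) * b i u) := by
      refine Finset.sum_congr rfl fun u _ => ?_
      rw [← hexp x u, ← hmv x u]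
    rw [h1, hpar]
    exact Finset.sum_congr rfl fun i _ => by ring
  have hn : ∀ x : V → ℝ, ∑ u, x u * x u = ∑ i, (∑ w, b i w * x w)^2 := by
    intro x
    have h1 : ∑ u, x u * x u
        = ∑ u, (∑ j, (∑ w, b j w * x w) * b j u) * (∑ i, (∑ w, b i w * x w) * b i u) := by
      refine Finset.sum_congr rfl fun u _ => by rw [← hexp x u]
    rw [h1, hpar]
    exact Finset.sum_congr rfl fun i _ => (sq _).symm
  have hlam_le : ∀ i, lam ≤ eig i := fun i => Finset.inf'_le _ (Finset.mem_univ i)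
  -- equality case of the Rayleigh bound
  have heqcase : ∀ x : V → ℝ, ∑ u, x u * (H *ᵥ x) u = lam * ∑ u, x u * x u →
      ∀ u, (H *ᵥ x) u = lam * x u := by
    intro x hx u
    have hzero : ∑ i, (eig i - lam) * (∑ w, b i w * x w)^2 = 0 := by
      have := hx
      rw [hq, hn, Finset.mul_sum] at this
      have h2 : ∑ i, (eig i - lam) * (∑ w, b i w * x w)^2
          = ∑ i, eig i * (∑ w, b i w * x w)^2 - ∑ i, lam * (∑ w, b i w * x w)^2 := by
        rw [← Finset.sum_sub_distrib]
        exact Finset.sum_congr rfl fun i _ => by ring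
      rw [h2, this, sub_self]
    have hterm : ∀ i ∈ Finset.univ, (0:ℝ) ≤ (eig i - lam) * (∑ w, b i w * x w)^2 :=
      fun i _ => mul_nonneg (sub_nonneg.mpr (hlam_le i)) (sq_nonneg _)
    have hall := (Finset.sum_eq_zero_iff_of_nonneg hterm).mp hzero
    have hcoeff : ∀ i, eig i * (∑ w, b i w * x w) = lam * (∑ w, b i w * x w) := by
      intro i
      have h3 := hall i (Finset.mem_univ i)
      rcases mul_eq_zero.mp h3 with h | h
      · have : eig i = lam := by linarith [sub_eq_zero.mp h]
        rw [this]
      · rw [pow_eq_zero_iff (two_ne_zero)] at h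
        rw [h, mul_zero, mul_zero]
    rw [hmv x u]
    calc ∑ i, (eig i * (∑ w, b i w * x w)) * b i u
        = ∑ i, lam * ((∑ w, b i w * x w) * b i u) := by
          refine Finset.sum_congr rfl fun i _ => ?_
          rw [hcoeff i]; ring
      _ = lam * ∑ i, (∑ w, b i w * x w) * b i u := (Finset.mul_sum _ _ _).symm
      _ = lam * x u := by rw [← hexp x u]
  -- ground state: the eigenvector for the minimal eigenvalue
  obtain ⟨i0, -, hi0⟩ := Finset.exists_mem_eq_inf' (Finset.univ_nonempty) hH.eigenvalues
  rw [← hlamdef] at hi0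
  have hlam_eq : eig i0 = lam := hi0.symm
  have hφeig : ∀ u, (H *ᵥ b i0) u = lam * b i0 u := by
    intro u
    rw [heig i0, hlam_eq]
    simp [Pi.smul_apply]
  have hnorm : ∑ v, b i0 v * b i0 v = 1 := by simpa using horth i0 i0
  -- the entrywise absolute value is also a ground state
  set a : V → ℝ := fun v => |b i0 v| with hadef
  have ha_nonneg : ∀ v, 0 ≤ a v := fun v => abs_nonneg _
  have ha_sq : ∀ v, a v * a v = b i0 v * b i0 v := fun v => abs_mul_abs_self _
  have hmva : ∀ (x : V → ℝ) (u : V), (H *ᵥ x) u = ∑ v, H u v * x v := fun _ _ => rfl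
  have hqa_le : ∑ u, a u * (H *ᵥ a) u ≤ lam * ∑ u, a u * a u := by
    have h1 : ∑ u, a u * (H *ᵥ a) u = ∑ u, ∑ v, H u v * (a u * a v) := by
      refine Finset.sum_congr rfl fun u _ => ?_
      rw [hmva, Finset.mul_sum]
      exact Finset.sum_congr rfl fun v _ => by ring
    have h2 : ∑ u, b i0 u * (H *ᵥ b i0) u = ∑ u, ∑ v, H u v * (b i0 u * b i0 v) := by
      refine Finset.sum_congr rfl fun u _ => ?_
      rw [hmva, Finset.mul_sum]
      exact Finset.sum_congr rfl fun v _ => by ring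
    have h3 : ∑ u, ∑ v, H u v * (a u * a v) ≤ ∑ u, ∑ v, H u v * (b i0 u * b i0 v) := by
      refine Finset.sum_le_sum fun u _ => Finset.sum_le_sum fun v _ => ?_
      by_cases huv : u = v
      · subst huv
        rw [ha_sq u]
      · have h4 : b i0 u * b i0 v ≤ a u * a v := by
          calc b i0 u * b i0 v ≤ |b i0 u * b i0 v| := le_abs_self _
            _ = a u * a v := abs_mul _ _
        exact mul_le_mul_of_nonpos_left h4 (hoff u v huv)
    have h5 : ∑ u, b i0 u * (H *ᵥ b i0) u = lam * ∑ u, a u * a u := by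
      calc ∑ u, b i0 u * (H *ᵥ b i0) u = ∑ u, lam * (b i0 u * b i0 u) := by
            refine Finset.sum_congr rfl fun u _ => ?_
            rw [hφeig u]; ring
        _ = lam * ∑ u, a u * a u := by
            rw [← Finset.mul_sum]
            congr 1
            exact Finset.sum_congr rfl fun u _ => (ha_sq u).symm
    rw [h1, ← h5, h2]
    exact h3
  have hqa_ge : lam * ∑ u, a u * a u ≤ ∑ u, a u * (H *ᵥ a) u := by
    rw [hq a, hn a, Finset.mul_sum]
    exact Finset.sum_le_sum fun i _ => mul_le_mul_of_nonneg_right (hlam_le i) (sq_nonneg _)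
  have haeig : ∀ u, (H *ᵥ a) u = lam * a u :=
    heqcase a (le_antisymm hqa_le hqa_ge)
  -- zero propagation and strict positivity
  have hz : ∀ u, a u = 0 → ∀ v, H u v ≠ 0 → a v = 0 := by
    intro u hu v hv
    by_cases huv : v = u
    · rw [huv]; exact hu
    · have h1 : ∑ w, H u w * a w = 0 := by
        rw [← hmva a u, haeig u, hu, mul_zero]
      have h2 : ∑ w ∈ Finset.univ.erase u, H u w * a w = 0 := by
        rw [Finset.sum_erase_eq_sub (Finset.mem_univ u), h1, hu, mul_zero, sub_zero]
      have h3 : ∀ w ∈ Finset.univ.erase u, H u w * a w ≤ 0 := by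
        intro w hw
        have hne : u ≠ w := fun h => (Finset.mem_erase.mp hw).1 h.symm
        have := mul_le_mul_of_nonneg_right (hoff u w hne) (ha_nonneg w)
        simpa using this
      have h4 := (Finset.sum_eq_zero_iff_of_nonpos h3).mp h2 v
        (Finset.mem_erase.mpr ⟨huv, Finset.mem_univ v⟩)
      rcases mul_eq_zero.mp h4 with h | h
      · exact absurd h hv
      · exact h
  have hzero_all : ∀ u, a u = 0 → ∀ w, a w = 0 := by
    intro u hu w
    obtain ⟨m, x, hx0, hxm, hstep⟩ := hirr u w
    have key : ∀ j, j ≤ m → a (x j) = 0 := by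
      intro j
      induction j with
      | zero => intro _; rw [hx0]; exact hu
      | succ k ih =>
        intro hk
        exact hz (x k) (ih (Nat.le_of_succ_le hk)) _ (hstep k (Nat.lt_of_succ_le hk))
    rw [← hxm]; exact key m le_rfl
  have hapos : ∀ v, 0 < a v := by
    intro v
    rcases (ha_nonneg v).lt_or_eq with h | h
    · exact h
    · exfalso
      have hall := hzero_all v h.symm
      have : ∑ v, b i0 v * b i0 v = 0 := by
        refine Finset.sum_eq_zero fun w _ => ?_
        rw [← ha_sq w, hall w, mul_zero]
      rw [hnorm] at this
      exact one_ne_zero this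
  -- average over the image of G in Perm V to get a G-invariant ground state
  set f : G →* Equiv.Perm V := MulAction.toPermHom G V with hfdef
  haveI : Fintype f.range := Fintype.ofFinite _
  set ψ : V → ℝ := fun v => ∑ σ : f.range, a ((σ : Equiv.Perm V) v) with hψdef
  have hHinv' : ∀ (σ : f.range) (u v : V),
      H ((σ : Equiv.Perm V) u) ((σ : Equiv.Perm V) v) = H u v := by
    rintro ⟨σ, g, rfl⟩ u v
    exact hinv g u v
  have hψeig : ∀ u, ∑ v, H u v * ψ v = lam * ψ u := by
    intro u
    calc ∑ v, H u v * ψ v = ∑ v, ∑ σ : f.range, H u v * a ((σ : Equiv.Perm V) v) := by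
          refine Finset.sum_congr rfl fun v _ => ?_
          rw [hψdef, Finset.mul_sum]
      _ = ∑ σ : f.range, ∑ v, H u v * a ((σ : Equiv.Perm V) v) := Finset.sum_comm
      _ = ∑ σ : f.range, lam * a ((σ : Equiv.Perm V) u) := by
          refine Finset.sum_congr rfl fun σ _ => ?_
          calc ∑ v, H u v * a ((σ : Equiv.Perm V) v)
              = ∑ v, H ((σ : Equiv.Perm V) u) ((σ : Equiv.Perm V) v)
                  * a ((σ : Equiv.Perm V) v) := by
                refine Finset.sum_congr rfl fun v _ => by rw [hHinv' σ u v]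
            _ = ∑ w, H ((σ : Equiv.Perm V) u) w * a w :=
                Equiv.sum_comp (σ : Equiv.Perm V) (fun w => H ((σ : Equiv.Perm V) u) w * a w)
            _ = lam * a ((σ : Equiv.Perm V) u) := by
                rw [← hmva a _, haeig]
      _ = lam * ψ u := by rw [hψdef, ← Finset.mul_sum]
  have hψpos : ∀ v, 0 < ψ v := by
    intro v
    refine Finset.sum_pos (fun σ _ => hapos _) ?_
    exact Finset.univ_nonempty
  have hψinv : ∀ (g : G) (v : V), ψ (g • v) = ψ v := by
    intro g v
    have hg : f g ∈ f.range := ⟨g, rfl⟩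
    calc ψ (g • v) = ∑ σ : f.range, a (((σ : Equiv.Perm V) * f g) v) := by
          refine Finset.sum_congr rfl fun σ _ => ?_
          congr 1
      _ = ψ v := by
          refine Fintype.sum_equiv (Equiv.mulRight (⟨f g, hg⟩ : f.range)) _ _ fun σ => ?_
          rfl
  -- ψ is constant on orbits
  have hmemOF : ∀ u v : V, v ∈ orbitFinset G u ↔ v ∈ MulAction.orbit G u :=
    fun u v => Set.Finite.mem_toFinset _
  have hψorb : ∀ (r' v : V), v ∈ MulAction.orbit G r' → ψ v = ψ r' := by
    intro r' v hv
    obtain ⟨g, hg⟩ := hv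
    rw [← hg]
    exact hψinv g r'
  have hsymm : ∀ u v : V, u ∈ MulAction.orbit G v → v ∈ MulAction.orbit G u := by
    rintro u v ⟨g, rfl⟩
    exact ⟨g⁻¹, by simp⟩
  -- partition of V into orbits of representatives
  have huniv : (Finset.univ : Finset V) = R.biUnion (fun r' => orbitFinset G r') := by
    ext v
    simp only [Finset.mem_univ, Finset.mem_biUnion, true_iff]
    obtain ⟨r, ⟨hrR, hro⟩, -⟩ := hR v
    exact ⟨r, hrR, (hmemOF r v).mpr (hsymm r v hro)⟩
  have hdisj : (R : Set V).PairwiseDisjoint (fun r' => orbitFinset G r') := by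
    intro r1 h1 r2 h2 hne
    refine Finset.disjoint_left.mpr fun v hv1 hv2 => ?_
    have hv1' := hsymm v r1 ((hmemOF r1 v).mp hv1)
    have hv2' := hsymm v r2 ((hmemOF r2 v).mp hv2)
    obtain ⟨r, -, hun⟩ := hR v
    exact hne ((hun r1 ⟨h1, hv1'⟩).trans (hun r2 ⟨h2, hv2'⟩).symm)
  refine ⟨ψ, fun r _ => hψpos r, fun r hr => ?_⟩
  calc ∑ r' ∈ R, (∑ v ∈ orbitFinset G r', H r v) * ψ r'
      = ∑ r' ∈ R, ∑ v ∈ orbitFinset G r', H r v * ψ v := by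
        refine Finset.sum_congr rfl fun r' _ => ?_
        rw [Finset.sum_mul]
        refine Finset.sum_congr rfl fun v hv => ?_
        rw [hψorb r' v ((hmemOF r' v).mp hv)]
    _ = ∑ v, H r v * ψ v := by rw [huniv, Finset.sum_biUnion hdisj]
    _ = lam * ψ r := hψeig r
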